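/- arXiv:1903.10056 — 2 statements merged into one kernel-verified Lean document; each statement's English description precedes it below -/
import Mathlib

section
/- Let (A, [·,·]) be a Lie algebra with bilinear product ▷, and define ⟦X,Y⟧ := X ▷ Y − Y ▷ X + [X,Y]. Then (A, [·,·], ▷) is a post-Lie algebra if and only if ⟦·,·⟧ is a Lie bracket and the connection ∇_X Y := X ▷ Y on (A, ⟦·,·⟧) is flat (R = 0) with parallel torsion (∇T = 0), in which case T = −[·,·]. -/
/-- Associator of a bilinear product. -/
def assoc {A : Type*} [AddCommGroup A] (p : A → A → A) (X Y Z : A) : A :=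
  p X (p Y Z) - p (p X Y) Z

/-- Associator triple bracket. -/
def tripleBracket {A : Type*} [AddCommGroup A] (p : A → A → A) (X Y Z : A) : A :=
  assoc p X Y Z - assoc p Y X Z

/-- Commutator bracket of a product. -/
def commProd {A : Type*} [AddCommGroup A] (p : A → A → A) (X Y : A) : A := p X Y - p Y X

/-- Cyclic sum of a trilinear expression. -/
def cyclicSum {A : Type*} [AddCommGroup A] (f : A → A → A → A) (X Y Z : A) : A :=
  f X Y Z + f Y Z X + f Z X Y

/-- Post-Lie iff `⟦·,·⟧` is a Lie bracket and `∇` is flat with parallel torsion;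
in which case `T = −[·,·]`. -/
theorem postLie_iff_flat_parallel_torsion {K : Type*} [Field K] [CharZero K]
    {A : Type*} [AddCommGroup A] [Module K A]
    (b : A →ₗ[K] A →ₗ[K] A) (p : A →ₗ[K] A →ₗ[K] A)
    (hskew : ∀ X Y : A, b X Y = - b Y X)
    (hjac : ∀ X Y Z : A, b X (b Y Z) + b Y (b Z X) + b Z (b X Y) = 0) :
    -- the bracket ⟦X,Y⟧ := X ▷ Y − Y ▷ X + [X,Y]
    (let br : A → A → A := fun X Y => p X Y - p Y X + b X Y
     -- torsion and curvature of ∇_X Y := X ▷ Y with respect to ⟦·,·⟧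
     let T : A → A → A := fun X Y => p X Y - p Y X - br X Y
     let R : A → A → A → A := fun X Y Z => p X (p Y Z) - p Y (p X Z) - p (br X Y) Z
     let covT : A → A → A → A := fun Z X Y => p Z (T X Y) - T (p Z X) Y - T X (p Z Y)
     ((∀ X Y Z : A,
         p X (b Y Z) = b (p X Y) Z + b Y (p X Z) ∧
         p (b X Y) Z = tripleBracket (fun X Y => p X Y) X Y Z) ↔
        ((∀ X Y Z : A, br X (br Y Z) + br Y (br Z X) + br Z (br X Y) = 0) ∧
         (∀ X Y Z : A, R X Y Z = 0) ∧
         (∀ Z X Y : A, covT Z X Y = 0))) ∧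
     (∀ X Y : A, T X Y = - b X Y)) := by
  dsimp only [tripleBracket, assoc]
  constructor
  · constructor
    · rintro h
      have hD : ∀ X Y Z : A, p X (b Y Z) = b (p X Y) Z + b Y (p X Z) := fun X Y Z => (h X Y Z).1
      have hT : ∀ X Y Z : A, p (b X Y) Z = p X (p Y Z) - p (p X Y) Z - (p Y (p X Z) - p (p Y X) Z) :=
        fun X Y Z => (h X Y Z).2
      refine ⟨?_, ?_, ?_⟩
      · intro X Y Z
        simp only [map_add, map_sub, LinearMap.add_apply, LinearMap.sub_apply]
        linear_combination (norm := module) hD X Y Z + hD Y Z X + hD Z X Y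
          - hT Y Z X - hT Z X Y - hT X Y Z
          + hskew (p X Y) Z + hskew (p Y Z) X + hskew (p Z X) Y + hjac X Y Z
      · intro X Y Z
        simp only [map_add, map_sub, LinearMap.add_apply, LinearMap.sub_apply]
        linear_combination (norm := module) - hT X Y Z
      · intro Z X Y
        simp only [map_add, map_sub, LinearMap.add_apply, LinearMap.sub_apply, map_neg,
          LinearMap.neg_apply]
        linear_combination (norm := module) - hD Z X Y
    · rintro ⟨_, hR, hcovT⟩ X Y Z
      constructor
      · have h := hcovT X Y Z
        simp only [map_add, map_sub, LinearMap.add_apply, LinearMap.sub_apply] at h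
        linear_combination (norm := module) - h
      · have h := hR X Y Z
        simp only [map_add, map_sub, LinearMap.add_apply, LinearMap.sub_apply] at h
        linear_combination (norm := module) - h
  · intro X Y
    abel
end

section
/- Let (A, [·,·]) be a Lie algebra with bilinear product ▷, define ⟦X,Y⟧ := X ▷ Y − Y ▷ X + [X,Y], and suppose ⟦·,·⟧ is a Lie bracket with ∇_X Y := X ▷ Y. Then (A, [·,·], ▷) is post-Lie if and only if both ∇ and its dual connection ∇̄_X Y := ∇_Y X + ⟦X,Y⟧ are flat. -/
/-- Assuming `⟦·,·⟧` is a Lie bracket, post-Lie iff both `∇` and `∇̄` are flat. -/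
theorem postLie_iff_both_flat {K : Type*} [Field K] [CharZero K]
    {A : Type*} [AddCommGroup A] [Module K A]
    (b : A →ₗ[K] A →ₗ[K] A) (p : A →ₗ[K] A →ₗ[K] A)
    (hskew : ∀ X Y : A, b X Y = - b Y X)
    (hjac : ∀ X Y Z : A, b X (b Y Z) + b Y (b Z X) + b Z (b X Y) = 0)
    (hJacBr : ∀ X Y Z : A,
      (fun X Y => p X Y - p Y X + b X Y) X ((fun X Y => p X Y - p Y X + b X Y) Y Z)
      + (fun X Y => p X Y - p Y X + b X Y) Y ((fun X Y => p X Y - p Y X + b X Y) Z X)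
      + (fun X Y => p X Y - p Y X + b X Y) Z ((fun X Y => p X Y - p Y X + b X Y) X Y) = 0) :
    (let br : A → A → A := fun X Y => p X Y - p Y X + b X Y
     let dual : A → A → A := fun X Y => p Y X + br X Y
     (∀ X Y Z : A,
        p X (b Y Z) = b (p X Y) Z + b Y (p X Z) ∧
        p (b X Y) Z = tripleBracket (fun X Y => p X Y) X Y Z) ↔
       ((∀ X Y Z : A, p X (p Y Z) - p Y (p X Z) - p (br X Y) Z = 0) ∧
        (∀ X Y Z : A, dual X (dual Y Z) - dual Y (dual X Z) - dual (br X Y) Z = 0))) := by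
  intro br dual
  -- normalized Jacobi identity for b
  have hjac' : ∀ X Y Z : A, b X (b Y Z) - b Y (b X Z) - b (b X Y) Z = 0 := by
    intro X Y Z
    have e1 : b Y (b Z X) = - b Y (b X Z) := by rw [hskew Z X, map_neg]
    have e2 : b Z (b X Y) = - b (b X Y) Z := hskew Z (b X Y)
    linear_combination (norm := module) hjac X Y Z - e1 - e2
  constructor
  · rintro h
    constructor
    · intro X Y Z
      have h2 := (h X Y Z).2
      simp only [tripleBracket, assoc] at h2
      simp only [br, map_add, map_sub, LinearMap.add_apply, LinearMap.sub_apply]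
      linear_combination (norm := module) - h2
    · intro X Y Z
      have h1 := (h X Y Z).1
      have h1' := (h Y X Z).1
      have h2 := (h X Y Z).2
      simp only [tripleBracket, assoc] at h2
      simp only [br, dual, map_add, map_sub, LinearMap.add_apply, LinearMap.sub_apply]
      linear_combination (norm := module) - h2 + h1 - h1' + hjac' X Y Z
  · rintro ⟨hF, hG⟩
    simp only [br, dual, map_add, map_sub, LinearMap.add_apply, LinearMap.sub_apply] at hF hG
    -- symmetry of D in first two arguments
    have key : ∀ X Y Z : A,
        (p X (b Y Z) - b (p X Y) Z - b Y (p X Z))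
          - (p Y (b X Z) - b (p Y X) Z - b X (p Y Z)) = 0 := by
      intro X Y Z
      linear_combination (norm := module) hG X Y Z - hF X Y Z - hjac' X Y Z
    -- antisymmetry of D in last two arguments (from skew-symmetry of b)
    have anti : ∀ X Y Z : A,
        (p X (b Y Z) - b (p X Y) Z - b Y (p X Z))
          + (p X (b Z Y) - b (p X Z) Y - b Z (p X Y)) = 0 := by
      intro X Y Z
      have e1 : p X (b Z Y) = - p X (b Y Z) := by rw [hskew Z Y, map_neg]
      have e2 : b (p X Z) Y = - b Y (p X Z) := hskew (p X Z) Y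
      have e3 : b Z (p X Y) = - b (p X Y) Z := hskew Z (p X Y)
      linear_combination (norm := module) e1 - e2 - e3
    have hD : ∀ X Y Z : A, p X (b Y Z) - b (p X Y) Z - b Y (p X Z) = 0 := by
      intro X Y Z
      set D : A → A → A → A := fun X Y Z => p X (b Y Z) - b (p X Y) Z - b Y (p X Z) with hDdef
      have sym : ∀ X Y Z : A, D X Y Z = D Y X Z := fun X Y Z => by
        have := key X Y Z; linear_combination (norm := module) this
      have asym : ∀ X Y Z : A, D X Y Z = - D X Z Y := fun X Y Z => by
        have := anti X Y Z; linear_combination (norm := module) this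
      have h6 : D X Y Z = - D X Y Z := by
        calc D X Y Z = D Y X Z := sym X Y Z
        _ = - D Y Z X := asym Y X Z
        _ = - D Z Y X := by rw [sym Y Z X]
        _ = D Z X Y := by rw [asym Z Y X, neg_neg]
        _ = D X Z Y := sym Z X Y
        _ = - D X Y Z := by rw [asym X Z Y]
      have h2 : (2 : K) • D X Y Z = 0 := by
        rw [two_smul]
        linear_combination (norm := module) h6
      have := (smul_eq_zero.mp h2).resolve_left (by norm_num)
      exact this
    intro X Y Z
    constructor
    · have := hD X Y Z
      linear_combination (norm := module) this
    · simp only [tripleBracket, assoc]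
      linear_combination (norm := module) - hF X Y Z
end
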